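/- Anchoring an edge x can only increase the trussness of edges with trussness at least t(x): if e is a follower of x (t^{x}(e) > t(e)), then t(e) ≥ t(x). -/
import Mathlib


variable {V : Type*}

/-- Support of an (unordered) edge in graph `H`: number of common neighbors. -/
noncomputable def esupp [Fintype V] (H : SimpleGraph V) : Sym2 V → ℕ :=
  Sym2.lift ⟨fun u v => Nat.card {w : V // H.Adj u w ∧ H.Adj v w},
    fun _ _ => Nat.card_congr (Equiv.subtypeEquivRight fun _ => and_comm)⟩

/-- `H` is a subgraph of `G` in which every edge has support at least `k-2`. -/
def IsTrussSub [Fintype V] (G H : SimpleGraph V) (k : ℕ) : Prop :=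
  H ≤ G ∧ ∀ e ∈ H.edgeSet, k - 2 ≤ esupp H e

/-- Trussness of an edge: the largest `k` such that some subgraph witnessing
the `k`-truss support condition contains it. -/
noncomputable def etruss [Fintype V] (G : SimpleGraph V) (e : Sym2 V) : ℕ :=
  sSup {k | ∃ H, IsTrussSub G H k ∧ e ∈ H.edgeSet}

/-- The `k`-truss of `G`: the maximal subgraph in which every edge has support `≥ k-2`. -/
noncomputable def trussG [Fintype V] (G : SimpleGraph V) (k : ℕ) : SimpleGraph V :=
  sSup {H | IsTrussSub G H k}

/-- Anchored truss-subgraph: edges in the anchor set `A` are exempt from the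
support constraint. -/
def IsATrussSub [Fintype V] (G H : SimpleGraph V) (A : Set (Sym2 V)) (k : ℕ) : Prop :=
  H ≤ G ∧ ∀ e ∈ H.edgeSet, e ∈ A ∨ k - 2 ≤ esupp H e

/-- Anchored trussness `t^A(e)`. -/
noncomputable def atruss [Fintype V] (G : SimpleGraph V) (A : Set (Sym2 V)) (e : Sym2 V) : ℕ :=
  sSup {k | ∃ H, IsATrussSub G H A k ∧ e ∈ H.edgeSet}

/-- The anchored `k`-truss of `G` with anchor set `A`. -/
noncomputable def atrussGraph [Fintype V] (G : SimpleGraph V) (A : Set (Sym2 V)) (k : ℕ) :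
    SimpleGraph V :=
  sSup {H | IsATrussSub G H A k}

/-- Trussness gain: total increment of trussness over all non-anchor edges. -/
noncomputable def TG [Fintype V] (G : SimpleGraph V) (A : Set (Sym2 V)) : ℕ :=
  ∑ e ∈ (G.edgeSet \ A).toFinite.toFinset, (atruss G A e - etruss G e)

/-- `a b c` form a triangle in `G`. -/
def IsTri (G : SimpleGraph V) (a b c : V) : Prop := G.Adj a b ∧ G.Adj b c ∧ G.Adj a c

/-- The three edges of the triangle on `a b c`. -/
def triE (a b c : V) : Set (Sym2 V) := {s(a, b), s(b, c), s(a, c)}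

/-- Two edges lie in a common triangle of `G`. -/
def ShareTri (G : SimpleGraph V) (e f : Sym2 V) : Prop :=
  ∃ a b c, IsTri G a b c ∧ e ∈ triE a b c ∧ f ∈ triE a b c

/-- Triangle connectivity: chain of triangles, consecutive ones sharing an edge. -/
def TriConn (G : SimpleGraph V) : Sym2 V → Sym2 V → Prop := Relation.TransGen (ShareTri G)

/-- A `k`-truss component: a truss-subgraph whose edges are pairwise
triangle-connected within it, maximal with these properties. -/
def IsTrussComponent [Fintype V] (G S : SimpleGraph V) (k : ℕ) : Prop :=
  IsTrussSub G S k ∧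
  (∀ e ∈ S.edgeSet, ∀ f ∈ S.edgeSet, e = f ∨ TriConn S e f) ∧
  ∀ S', IsTrussSub G S' k →
    (∀ e ∈ S'.edgeSet, ∀ f ∈ S'.edgeSet, e = f ∨ TriConn S' e f) → S ≤ S' → S' = S

section Aux
variable [Fintype V]

lemma esupp_mono {H H' : SimpleGraph V} (h : H ≤ H') (e : Sym2 V) :
    esupp H e ≤ esupp H' e := by
  induction e using Sym2.ind with
  | _ u v =>
    simp only [esupp, Sym2.lift_mk]
    exact Nat.card_le_card_of_injective
      (fun w => ⟨w.1, h w.2.1, h w.2.2⟩)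
      (fun a b hab => by simpa [Subtype.ext_iff] using hab)

lemma esupp_le_card (H : SimpleGraph V) (e : Sym2 V) :
    esupp H e ≤ Fintype.card V := by
  induction e using Sym2.ind with
  | _ u v =>
    simp only [esupp, Sym2.lift_mk]
    calc Nat.card {w : V // H.Adj u w ∧ H.Adj v w} ≤ Nat.card V :=
          Nat.card_le_card_of_injective Subtype.val Subtype.val_injective
      _ = Fintype.card V := Nat.card_eq_fintype_card

lemma truss_bdd (G : SimpleGraph V) (e : Sym2 V) :
    BddAbove {k | ∃ H, IsTrussSub G H k ∧ e ∈ H.edgeSet} := by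
  refine ⟨Fintype.card V + 2, fun k hk => ?_⟩
  obtain ⟨H, hH, heH⟩ := hk
  have h1 := hH.2 e heH
  have h2 := esupp_le_card H e
  omega

lemma atruss_bdd (G : SimpleGraph V) (x e : Sym2 V) (hne : e ≠ x) :
    BddAbove {k | ∃ H, IsATrussSub G H {x} k ∧ e ∈ H.edgeSet} := by
  refine ⟨Fintype.card V + 2, fun k hk => ?_⟩
  obtain ⟨H, hH, heH⟩ := hk
  rcases hH.2 e heH with h1 | h1
  · exact absurd h1 hne
  · have h2 := esupp_le_card H e
    omega

end Aux

theorem stmt13 [Fintype V] (G : SimpleGraph V) (x e : Sym2 V)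
    (hx : x ∈ G.edgeSet) (he : e ∈ G.edgeSet) (hne : e ≠ x)
    (hf : etruss G e < atruss G {x} e) : etruss G x ≤ etruss G e := by
  by_contra hcon
  push_neg at hcon
  set m := etruss G e + 1 with hm
  -- anchored set for e is nonempty and bounded
  have hAne : {k | ∃ H, IsATrussSub G H {x} k ∧ e ∈ H.edgeSet}.Nonempty :=
    ⟨0, G, ⟨le_refl G, fun f _ => Or.inr (by simp)⟩, he⟩
  have hAbdd := atruss_bdd G x e hne
  have hAmem : atruss G {x} e ∈ {k | ∃ H, IsATrussSub G H {x} k ∧ e ∈ H.edgeSet} :=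
    Nat.sSup_mem hAne hAbdd
  obtain ⟨H0, hH0, heH0⟩ := hAmem
  -- lower anchored witness to level m
  have hmA : m ≤ atruss G {x} e := hf
  have hH : IsATrussSub G H0 {x} m := by
    refine ⟨hH0.1, fun f hfH => ?_⟩
    rcases hH0.2 f hfH with h | h
    · exact Or.inl h
    · exact Or.inr (le_trans (Nat.sub_le_sub_right hmA 2) h)
  -- truss set for x nonempty and bounded
  have hXne : {k | ∃ H, IsTrussSub G H k ∧ x ∈ H.edgeSet}.Nonempty :=
    ⟨0, G, ⟨le_refl G, fun f _ => by simp⟩, hx⟩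
  have hXmem : etruss G x ∈ {k | ∃ H, IsTrussSub G H k ∧ x ∈ H.edgeSet} :=
    Nat.sSup_mem hXne (truss_bdd G x)
  obtain ⟨W, hW0, hxW⟩ := hXmem
  have hmX : m ≤ etruss G x := hcon
  have hW : IsTrussSub G W m :=
    ⟨hW0.1, fun f hfW => le_trans (Nat.sub_le_sub_right hmX 2) (hW0.2 f hfW)⟩
  -- H0 ⊔ W is a plain truss-sub at level m containing e
  have hsup : IsTrussSub G (H0 ⊔ W) m := by
    refine ⟨sup_le hH.1 hW.1, fun f hfS => ?_⟩
    rw [SimpleGraph.edgeSet_sup] at hfS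
    rcases hfS with hfH | hfW
    · rcases hH.2 f hfH with h | h
      · rw [Set.mem_singleton_iff] at h
        subst h
        exact le_trans (hW.2 f hxW) (esupp_mono le_sup_right f)
      · exact le_trans h (esupp_mono le_sup_left f)
    · exact le_trans (hW.2 f hfW) (esupp_mono le_sup_right f)
  have : m ≤ etruss G e := by
    apply le_csSup (truss_bdd G e)
    exact ⟨H0 ⊔ W, hsup, by rw [SimpleGraph.edgeSet_sup]; exact Or.inl heH0⟩
  omega
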